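/- Let b > 0 and m, n positive integers, and let d₃ > 0 be a constant. Then the integral ∫₀^∞ ∫_{−∞}^0 (λ − d₃·e^{2πb(mk−ny)})₊ dy dk equals (1/(mn(2πb)²))·∫_{d₃}^{λ} ∫_{1}^{λ/u₁} (λ − u₁u₂)/(u₁u₂) du₂ du₁ for λ ≥ d₃, and this equals λ(log λ)²/(2mn(2πb)²) + O(λ log λ) as λ → ∞. -/

import Mathlib

open Real MeasureTheory

private lemma ite_int (T : ℝ) (f : ℝ → ℝ) :
    (∫ t in Set.Ioi (0:ℝ), (if t ≤ T then f t else 0))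
      = ∫ t in Set.Ioc (0:ℝ) T, f t := by
  have h1 : ∀ t : ℝ, (if t ≤ T then f t else 0) = Set.indicator (Set.Iic T) f t := by
    intro t; simp [Set.indicator_apply, Set.mem_Iic]
  simp_rw [h1]
  rw [MeasureTheory.setIntegral_indicator measurableSet_Iic, Set.Ioi_inter_Iic]

private lemma one_var (a c lam : ℝ) (ha : 0 < a) (hc : 0 < c) (h : c ≤ lam) :
    (∫ t in Set.Ioi (0:ℝ), max (lam - c * Real.exp (a * t)) 0)
      = (lam * Real.log (lam / c) - lam + c) / a := by
  have hlam : 0 < lam := lt_of_lt_of_le hc h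
  set T : ℝ := Real.log (lam / c) / a with hTdef
  have hlc : (1:ℝ) ≤ lam / c := (one_le_div hc).mpr h
  have hT0 : 0 ≤ T := div_nonneg (Real.log_nonneg hlc) ha.le
  have haT : a * T = Real.log (lam / c) := by
    rw [hTdef]; field_simp
  have key : ∀ t : ℝ, max (lam - c * Real.exp (a * t)) 0
      = if t ≤ T then lam - c * Real.exp (a * t) else 0 := by
    intro t
    by_cases ht : t ≤ T
    · rw [if_pos ht]
      apply max_eq_left
      have h1 : a * t ≤ Real.log (lam / c) := by
        rw [← haT]; exact mul_le_mul_of_nonneg_left ht ha.le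
      have h2 : Real.exp (a * t) ≤ lam / c := by
        calc Real.exp (a * t) ≤ Real.exp (Real.log (lam / c)) := Real.exp_le_exp.mpr h1
          _ = lam / c := Real.exp_log (by positivity)
      have h3 : c * Real.exp (a * t) ≤ c * (lam / c) := by nlinarith
      have h4 : c * (lam / c) = lam := by field_simp
      linarith
    · rw [if_neg ht]
      apply max_eq_right
      push_neg at ht
      have h1 : Real.log (lam / c) < a * t := by
        rw [← haT]; exact mul_lt_mul_of_pos_left ht ha
      have h2 : lam / c < Real.exp (a * t) := by
        calc lam / c = Real.exp (Real.log (lam / c)) := (Real.exp_log (by positivity)).symm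
          _ < Real.exp (a * t) := Real.exp_lt_exp.mpr h1
      have h3 : c * (lam / c) < c * Real.exp (a * t) := by nlinarith
      have h4 : c * (lam / c) = lam := by field_simp
      linarith
  have hderiv : ∀ t ∈ Set.uIcc (0:ℝ) T,
      HasDerivAt (fun t => lam * t - c / a * Real.exp (a * t))
        (lam - c * Real.exp (a * t)) t := by
    intro t _
    have h1 : HasDerivAt (fun t : ℝ => lam * t) lam t := by
      simpa using (hasDerivAt_id t).const_mul lam
    have h2 : HasDerivAt (fun t : ℝ => Real.exp (a * t)) (Real.exp (a * t) * a) t := by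
      simpa using ((hasDerivAt_id t).const_mul a).exp
    have := h1.sub (h2.const_mul (c / a))
    refine this.congr_deriv ?_
    field_simp
  calc (∫ t in Set.Ioi (0:ℝ), max (lam - c * Real.exp (a * t)) 0)
      = ∫ t in Set.Ioi (0:ℝ), (if t ≤ T then lam - c * Real.exp (a * t) else 0) := by
        simp_rw [key]
    _ = ∫ t in Set.Ioc (0:ℝ) T, (lam - c * Real.exp (a * t)) := ite_int T _
    _ = ∫ t in (0:ℝ)..T, (lam - c * Real.exp (a * t)) :=
        (intervalIntegral.integral_of_le hT0).symm
    _ = (lam * T - c / a * Real.exp (a * T)) - (lam * 0 - c / a * Real.exp (a * 0)) :=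
        intervalIntegral.integral_eq_sub_of_hasDerivAt hderiv
          (Continuous.intervalIntegrable (by fun_prop) _ _)
    _ = (lam * Real.log (lam / c) - lam + c) / a := by
        rw [haT, Real.exp_log (by positivity : (0:ℝ) < lam / c), hTdef]
        simp only [mul_zero, Real.exp_zero]
        field_simp
        ring

private lemma one_var_zero (a c lam : ℝ) (ha : 0 < a) (hc : 0 < c) (h : lam < c) :
    (∫ t in Set.Ioi (0:ℝ), max (lam - c * Real.exp (a * t)) 0) = 0 := by
  rw [MeasureTheory.setIntegral_congr_fun measurableSet_Ioi
    (g := fun _ => (0:ℝ)) ?_, MeasureTheory.integral_zero]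
  intro t ht
  simp only [Set.mem_Ioi] at ht
  apply max_eq_right
  have h1 : (1:ℝ) ≤ Real.exp (a * t) := Real.one_le_exp (by positivity)
  nlinarith

set_option maxHeartbeats 1000000 in
private lemma closed_form (b d₃ : ℝ) (hb : 0 < b) (hd₃ : 0 < d₃)
    (m n : ℕ) (hm : 0 < m) (hn : 0 < n) (lam : ℝ) (hlam : d₃ ≤ lam) :
    (∫ k in Set.Ioi (0:ℝ), ∫ y in Set.Iio (0:ℝ),
        max (lam - d₃ * Real.exp (2 * π * b * (m * k - n * y))) 0)
      = (lam * (Real.log (lam / d₃))^2 / 2 - lam * Real.log (lam / d₃) + lam - d₃)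
          / ((2 * π * b)^2 * m * n) := by
  set A := 2 * π * b with hAdef
  have hApos : 0 < A := by rw [hAdef]; positivity
  have hmpos : (0:ℝ) < m := by exact_mod_cast hm
  have hnpos : (0:ℝ) < n := by exact_mod_cast hn
  have hlampos : 0 < lam := lt_of_lt_of_le hd₃ hlam
  set L := Real.log (lam / d₃) with hLdef
  have hL0 : 0 ≤ L := Real.log_nonneg ((one_le_div hd₃).mpr hlam)
  set K := L / (A * m) with hKdef
  have hK0 : 0 ≤ K := div_nonneg hL0 (by positivity)
  have hAmK : A * m * K = L := by rw [hKdef]; field_simp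
  have hexpK : Real.exp (A * m * K) = lam / d₃ := by
    rw [hAmK, hLdef, Real.exp_log (by positivity)]
  have inner_eq : ∀ k : ℝ,
      (∫ y in Set.Iio (0:ℝ), max (lam - d₃ * Real.exp (A * (m * k - n * y))) 0)
        = if k ≤ K then (lam * (L - A * m * k) - lam + d₃ * Real.exp (A * m * k)) / (A * n)
          else 0 := by
    intro k
    have step1 : (∫ y in Set.Iio (0:ℝ), max (lam - d₃ * Real.exp (A * (m * k - n * y))) 0)
        = ∫ t in Set.Ioi (0:ℝ),
            max (lam - (d₃ * Real.exp (A * m * k)) * Real.exp ((A * n) * t)) 0 := by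
      have h2 := integral_comp_neg_Ioi (0:ℝ)
        (fun y => max (lam - d₃ * Real.exp (A * (m * k - n * y))) 0)
      rw [neg_zero] at h2
      rw [← MeasureTheory.integral_Iic_eq_integral_Iio, ← h2]
      refine MeasureTheory.setIntegral_congr_fun measurableSet_Ioi fun t _ => ?_
      have e1 : d₃ * Real.exp (A * (↑m * k - ↑n * (-t)))
          = (d₃ * Real.exp (A * ↑m * k)) * Real.exp ((A * ↑n) * t) := by
        rw [show A * (↑m * k - ↑n * (-t)) = A * ↑m * k + A * ↑n * t by ring, Real.exp_add]
        ring
      simp only [e1]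
    rw [step1]
    by_cases hk : k ≤ K
    · rw [if_pos hk]
      have hc : 0 < d₃ * Real.exp (A * m * k) := by positivity
      have hcle : d₃ * Real.exp (A * m * k) ≤ lam := by
        have h1 : A * m * k ≤ L := by
          rw [← hAmK]; exact mul_le_mul_of_nonneg_left hk (by positivity)
        have h2 : Real.exp (A * m * k) ≤ lam / d₃ := by
          calc Real.exp (A * ↑m * k) ≤ Real.exp (A * ↑m * K) := Real.exp_le_exp.mpr (by linarith)
            _ = lam / d₃ := hexpK
        calc d₃ * Real.exp (A * ↑m * k) ≤ d₃ * (lam / d₃) := by nlinarith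
          _ = lam := by field_simp
      rw [one_var (A * n) _ lam (by positivity) hc hcle]
      have hlog : Real.log (lam / (d₃ * Real.exp (A * ↑m * k))) = L - A * ↑m * k := by
        rw [Real.log_div hlampos.ne' (by positivity), Real.log_mul hd₃.ne'
          (Real.exp_ne_zero _), Real.log_exp, hLdef,
          Real.log_div hlampos.ne' hd₃.ne']
        ring
      rw [hlog]
    · rw [if_neg hk]
      push_neg at hk
      apply one_var_zero (A * n) _ lam (by positivity) (by positivity)
      have h1 : L < A * m * k := by
        rw [← hAmK]; exact mul_lt_mul_of_pos_left hk (by positivity)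
      have h2 : lam / d₃ < Real.exp (A * m * k) := by
        calc lam / d₃ = Real.exp (A * ↑m * K) := hexpK.symm
          _ < Real.exp (A * ↑m * k) := Real.exp_lt_exp.mpr (by linarith)
      calc lam = d₃ * (lam / d₃) := by field_simp
        _ < d₃ * Real.exp (A * ↑m * k) := by nlinarith
  have hderiv : ∀ k ∈ Set.uIcc (0:ℝ) K,
      HasDerivAt (fun k => (lam * L * k - lam * (A * m) * k^2 / 2 - lam * k
          + d₃ * Real.exp (A * m * k) / (A * m)) / (A * n))
        ((lam * (L - A * m * k) - lam + d₃ * Real.exp (A * m * k)) / (A * n)) k := by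
    intro k _
    have h1 : HasDerivAt (fun k : ℝ => lam * L * k) (lam * L) k := by
      simpa using (hasDerivAt_id k).const_mul (lam * L)
    have h2 : HasDerivAt (fun k : ℝ => lam * (A * m) * k^2 / 2) (lam * (A * m) * k) k := by
      have := ((hasDerivAt_pow 2 k).const_mul (lam * (A * (m:ℝ)))).div_const 2
      refine this.congr_deriv ?_
      push_cast; ring
    have h3 : HasDerivAt (fun k : ℝ => lam * k) lam k := by
      simpa using (hasDerivAt_id k).const_mul lam
    have h4 : HasDerivAt (fun k : ℝ => d₃ * Real.exp (A * m * k) / (A * m))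
        (d₃ * (Real.exp (A * m * k) * (A * m)) / (A * m)) k := by
      have he : HasDerivAt (fun k : ℝ => Real.exp (A * m * k))
          (Real.exp (A * m * k) * (A * m)) k := by
        simpa using ((hasDerivAt_id k).const_mul (A * m)).exp
      exact (he.const_mul d₃).div_const (A * m)
    have := (((h1.sub h2).sub h3).add h4).div_const (A * n)
    refine this.congr_deriv ?_
    have hAm : A * (m:ℝ) ≠ 0 := by positivity
    field_simp
  calc (∫ k in Set.Ioi (0:ℝ), ∫ y in Set.Iio (0:ℝ),
        max (lam - d₃ * Real.exp (A * (m * k - n * y))) 0)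
      = ∫ k in Set.Ioi (0:ℝ), (if k ≤ K then
          (lam * (L - A * m * k) - lam + d₃ * Real.exp (A * m * k)) / (A * n) else 0) :=
        MeasureTheory.setIntegral_congr_fun measurableSet_Ioi fun k _ => inner_eq k
    _ = ∫ k in Set.Ioc (0:ℝ) K,
          (lam * (L - A * m * k) - lam + d₃ * Real.exp (A * m * k)) / (A * n) := ite_int K _
    _ = ∫ k in (0:ℝ)..K,
          (lam * (L - A * m * k) - lam + d₃ * Real.exp (A * m * k)) / (A * n) :=
        (intervalIntegral.integral_of_le hK0).symm
    _ = ((lam * L * K - lam * (A * m) * K^2 / 2 - lam * K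
          + d₃ * Real.exp (A * m * K) / (A * m)) / (A * n))
        - ((lam * L * 0 - lam * (A * m) * 0^2 / 2 - lam * 0
          + d₃ * Real.exp (A * m * 0) / (A * m)) / (A * n)) :=
        intervalIntegral.integral_eq_sub_of_hasDerivAt hderiv
          (Continuous.intervalIntegrable (by fun_prop) _ _)
    _ = (lam * L^2 / 2 - lam * L + lam - d₃) / (A^2 * m * n) := by
        rw [hexpK]
        have hKval : K = L / (A * m) := hKdef
        rw [hKval]
        simp only [mul_zero, Real.exp_zero]
        have hAm : A * (m:ℝ) ≠ 0 := by positivity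
        field_simp
        ring

set_option maxHeartbeats 1000000 in
private lemma rhs_val (d₃ lam : ℝ) (hd₃ : 0 < d₃) (hlam : d₃ ≤ lam) :
    (∫ u₁ in d₃..lam, ∫ u₂ in (1:ℝ)..(lam / u₁), (lam - u₁ * u₂) / (u₁ * u₂))
      = lam * (Real.log (lam / d₃))^2 / 2 - lam * Real.log (lam / d₃) + lam - d₃ := by
  have hlampos : 0 < lam := lt_of_lt_of_le hd₃ hlam
  have huIcc : Set.uIcc d₃ lam = Set.Icc d₃ lam := Set.uIcc_of_le hlam
  have inner_eq : ∀ u₁ ∈ Set.uIcc d₃ lam,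
      (∫ u₂ in (1:ℝ)..(lam / u₁), (lam - u₁ * u₂) / (u₁ * u₂))
        = lam / u₁ * Real.log (lam / u₁) - lam / u₁ + 1 := by
    intro u₁ hu₁
    rw [huIcc] at hu₁
    obtain ⟨hu₁l, hu₁r⟩ := hu₁
    have hu₁pos : 0 < u₁ := lt_of_lt_of_le hd₃ hu₁l
    have hru : (1:ℝ) ≤ lam / u₁ := (one_le_div hu₁pos).mpr hu₁r
    have huIcc2 : Set.uIcc (1:ℝ) (lam / u₁) = Set.Icc 1 (lam / u₁) := Set.uIcc_of_le hru
    have hderiv : ∀ u₂ ∈ Set.uIcc (1:ℝ) (lam / u₁),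
        HasDerivAt (fun u₂ => lam / u₁ * Real.log u₂ - u₂)
          ((lam - u₁ * u₂) / (u₁ * u₂)) u₂ := by
      intro u₂ hu₂
      rw [huIcc2] at hu₂
      have hu₂pos : 0 < u₂ := lt_of_lt_of_le one_pos hu₂.1
      have h1 : HasDerivAt (fun u₂ : ℝ => lam / u₁ * Real.log u₂) (lam / u₁ * u₂⁻¹) u₂ :=
        (Real.hasDerivAt_log hu₂pos.ne').const_mul (lam / u₁)
      have := h1.sub (hasDerivAt_id u₂)
      refine this.congr_deriv ?_
      field_simp
      try ring
    have hcont : ContinuousOn (fun u₂ => (lam - u₁ * u₂) / (u₁ * u₂))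
        (Set.uIcc (1:ℝ) (lam / u₁)) := by
      apply ContinuousOn.div
      · fun_prop
      · fun_prop
      · intro u₂ hu₂
        rw [huIcc2] at hu₂
        have hu₂pos : 0 < u₂ := lt_of_lt_of_le one_pos hu₂.1
        positivity
    rw [intervalIntegral.integral_eq_sub_of_hasDerivAt hderiv
      (hcont.intervalIntegrable)]
    simp [Real.log_one]
  rw [intervalIntegral.integral_congr inner_eq]
  have hderiv : ∀ u ∈ Set.uIcc d₃ lam,
      HasDerivAt (fun u => lam * Real.log lam * Real.log u - lam * (Real.log u)^2 / 2
          - lam * Real.log u + u)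
        (lam / u * Real.log (lam / u) - lam / u + 1) u := by
    intro u hu
    rw [huIcc] at hu
    have hupos : 0 < u := lt_of_lt_of_le hd₃ hu.1
    have hlog : HasDerivAt Real.log u⁻¹ u := Real.hasDerivAt_log hupos.ne'
    have h1 : HasDerivAt (fun u : ℝ => lam * Real.log lam * Real.log u)
        (lam * Real.log lam * u⁻¹) u := hlog.const_mul _
    have h2 : HasDerivAt (fun u : ℝ => lam * (Real.log u)^2 / 2)
        (lam * (2 * Real.log u * u⁻¹) / 2) u := by
      have := ((hlog.pow 2).const_mul lam).div_const 2
      refine this.congr_deriv ?_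
      ring
    have h3 : HasDerivAt (fun u : ℝ => lam * Real.log u) (lam * u⁻¹) u := hlog.const_mul lam
    have := ((h1.sub h2).sub h3).add (hasDerivAt_id u)
    refine this.congr_deriv ?_
    rw [Real.log_div hlampos.ne' hupos.ne']
    field_simp
  have hcont : ContinuousOn (fun u => lam / u * Real.log (lam / u) - lam / u + 1)
      (Set.uIcc d₃ lam) := by
    have hne : ∀ u ∈ Set.uIcc d₃ lam, u ≠ 0 := by
      intro u hu
      rw [huIcc] at hu
      exact (lt_of_lt_of_le hd₃ hu.1).ne'
    apply ContinuousOn.add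
    · apply ContinuousOn.sub
      · apply ContinuousOn.mul
        · exact continuousOn_const.div continuousOn_id hne
        · apply ContinuousOn.log
          · exact continuousOn_const.div continuousOn_id hne
          · intro u hu
            rw [huIcc] at hu
            have hupos : 0 < u := lt_of_lt_of_le hd₃ hu.1
            positivity
      · exact continuousOn_const.div continuousOn_id hne
    · exact continuousOn_const
  rw [intervalIntegral.integral_eq_sub_of_hasDerivAt hderiv hcont.intervalIntegrable]
  rw [Real.log_div hlampos.ne' hd₃.ne']
  ring

set_option maxHeartbeats 1000000 in
theorem mixed_term_integral (b d₃ : ℝ) (hb : 0 < b) (hd₃ : 0 < d₃)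
    (m n : ℕ) (hm : 0 < m) (hn : 0 < n) :
    (∀ lam : ℝ, d₃ ≤ lam →
      (∫ k in Set.Ioi (0:ℝ), ∫ y in Set.Iio (0:ℝ),
          max (lam - d₃ * Real.exp (2 * π * b * (m * k - n * y))) 0)
        = (1 / (m * n * (2 * π * b)^2)) *
            ∫ u₁ in d₃..lam, ∫ u₂ in (1:ℝ)..(lam / u₁), (lam - u₁ * u₂) / (u₁ * u₂)) ∧
    (∃ C Λ : ℝ, 0 < C ∧ 0 < Λ ∧ ∀ lam : ℝ, Λ ≤ lam →
      |(∫ k in Set.Ioi (0:ℝ), ∫ y in Set.Iio (0:ℝ),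
          max (lam - d₃ * Real.exp (2 * π * b * (m * k - n * y))) 0)
        - lam * (Real.log lam)^2 / (2 * m * n * (2 * π * b)^2)|
      ≤ C * lam * Real.log lam) := by
  have hApos : 0 < 2 * π * b := by positivity
  have hmpos : (0:ℝ) < m := by exact_mod_cast hm
  have hnpos : (0:ℝ) < n := by exact_mod_cast hn
  constructor
  · intro lam hlam
    rw [closed_form b d₃ hb hd₃ m n hm hn lam hlam, rhs_val d₃ lam hd₃ hlam]
    ring
  · set y := Real.log d₃ with hydef
    set E := (2 * π * b)^2 * (m:ℝ) * n with hEdef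
    have hEpos : 0 < E := by rw [hEdef]; positivity
    refine ⟨(2 * |y| + y^2 / 2 + 3) / E, d₃ + Real.exp 1, by positivity, by positivity,
      fun lam hlam => ?_⟩
    have hexp1 : (0:ℝ) < Real.exp 1 := Real.exp_pos 1
    have hd₃lam : d₃ ≤ lam := by linarith
    have hlampos : 0 < lam := lt_of_lt_of_le hd₃ hd₃lam
    have helam : Real.exp 1 ≤ lam := by linarith
    have hx1 : 1 ≤ Real.log lam := by
      rw [Real.le_log_iff_exp_le hlampos]; exact helam
    have hlam1 : 1 ≤ lam := by
      nlinarith [Real.add_one_le_exp (1:ℝ)]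
    set x := Real.log lam with hxdef
    rw [closed_form b d₃ hb hd₃ m n hm hn lam hd₃lam]
    have hLxy : Real.log (lam / d₃) = x - y := Real.log_div hlampos.ne' hd₃.ne'
    rw [hLxy]
    have key : (lam * (x - y)^2 / 2 - lam * (x - y) + lam - d₃) / ((2 * π * b)^2 * m * n)
        - lam * x^2 / (2 * m * n * (2 * π * b)^2)
        = (-(lam * x * y) + lam * y^2 / 2 - lam * x + lam * y + lam - d₃) / E := by
      rw [hEdef]
      field_simp
      ring
    rw [key, abs_div, abs_of_pos hEpos]
    have hbound : |(-(lam * x * y) + lam * y^2 / 2 - lam * x + lam * y + lam - d₃)|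
        ≤ 2 * (lam * x * |y|) + lam * x * y^2 / 2 + 3 * (lam * x) := by
      have hy1 : y ≤ |y| := le_abs_self y
      have hy2 : -|y| ≤ y := neg_abs_le y
      have h0 : 0 ≤ lam * x := by positivity
      have h2 : lam ≤ lam * x := by nlinarith
      have h3 : lam * y^2 / 2 ≤ lam * x * y^2 / 2 := by nlinarith
      have h3' : 0 ≤ lam * y^2 / 2 := by positivity
      have h4 : lam * x * y ≤ lam * x * |y| := by nlinarith
      have h4' : -(lam * x * |y|) ≤ lam * x * y := by nlinarith
      have h5 : lam * y ≤ lam * x * |y| := by nlinarith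
      have h5' : -(lam * x * |y|) ≤ lam * y := by nlinarith
      rw [abs_le]
      constructor
      · linarith
      · linarith
    calc |(-(lam * x * y) + lam * y^2 / 2 - lam * x + lam * y + lam - d₃)| / E
        ≤ (2 * (lam * x * |y|) + lam * x * y^2 / 2 + 3 * (lam * x)) / E := by
          gcongr
      _ = (2 * |y| + y^2 / 2 + 3) / E * lam * x := by ring
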